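/- In ℝ^d, if every cluster of a partition containing p has diameter at most γ(p)·h where γ(p) is the k-th nearest-neighbor radius and this holds for all points p in the cluster, then each cluster contains at most k·(1+8h)^d points of X; consequently a partition of X into such clusters has every cluster of size at most k·(1+8h)^d, giving brute-force enumeration complexity at most 2^{k(1+8h)^d} per cluster. -/

import Mathlib

/-- The distance from `p` to its `k`-th nearest neighbor in the finite set `X`. -/
noncomputable def kthDist {d : ℕ} (X : Finset (EuclideanSpace ℝ (Fin d))) (k : ℕ)
    (p : EuclideanSpace ℝ (Fin d)) : ℝ :=
  ((X.val.map (fun x => dist p x)).sort (· ≤ ·)).getD (k - 1) 0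

/-- In a sorted list, the number of entries strictly below the `i`-th entry is at most `i`. -/
lemma countP_lt_of_sorted (L : List ℝ) (hL : L.Pairwise (· ≤ ·)) (i : ℕ) (hi : i < L.length) :
    L.countP (fun a => decide (a < L.getD i 0)) ≤ i := by
  set c : ℝ := L.getD i 0 with hc
  have hcg : c = L[i] := List.getD_eq_getElem L 0 hi
  have hdrop : (L.drop i).countP (fun a => decide (a < c)) = 0 := by
    rw [List.countP_eq_zero]
    intro a ha
    obtain ⟨j, hj, rfl⟩ := List.mem_iff_getElem.mp ha
    have hij : i + j < L.length := by
      have := hj; rw [List.length_drop] at this; omega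
    have : L[i] ≤ L[i + j] := by
      have := hL.rel_get_of_le (a := ⟨i, hi⟩) (b := ⟨i + j, hij⟩) (by simp [Fin.le_def])
      simpa using this
    rw [List.getElem_drop]
    simp only [decide_eq_true_eq, not_lt]
    rw [hcg]; exact this
  calc L.countP (fun a => decide (a < c))
      = (L.take i ++ L.drop i).countP (fun a => decide (a < c)) := by
        rw [List.take_append_drop]
    _ = (L.take i).countP (fun a => decide (a < c))
        + (L.drop i).countP (fun a => decide (a < c)) := List.countP_append
    _ ≤ (L.take i).length + 0 := by
        rw [hdrop]; exact Nat.add_le_add List.countP_le_length le_rfl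
    _ ≤ i := by simp [List.length_take]

lemma kthDist_nonneg {d : ℕ} (X : Finset (EuclideanSpace ℝ (Fin d))) (k : ℕ)
    (p : EuclideanSpace ℝ (Fin d)) : 0 ≤ kthDist X k p := by
  unfold kthDist
  set L := ((X.val.map (fun x => dist p x)).sort (· ≤ ·)) with hLdef
  rcases lt_or_ge (k - 1) L.length with hlt | hge
  · rw [List.getD_eq_getElem L 0 hlt]
    have hmem : L[k-1] ∈ L := List.getElem_mem _
    have : (L[k-1] : ℝ) ∈ (X.val.map (fun x => dist p x)) := by
      rw [← Multiset.sort_eq (X.val.map (fun x => dist p x)) (· ≤ ·)]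
      exact_mod_cast hmem
    obtain ⟨x, _, hx⟩ := Multiset.mem_map.mp this
    rw [← hx]; exact dist_nonneg
  · rw [List.getD_eq_default L 0 hge]

/-- Packing bound: fewer than `k` points of `X` lie strictly within `kthDist X k p` of `p`. -/
lemma card_lt_kthDist {d : ℕ} (X : Finset (EuclideanSpace ℝ (Fin d))) (k : ℕ)
    (hk : 1 ≤ k) (hkX : k ≤ X.card) (p : EuclideanSpace ℝ (Fin d)) :
    (X.filter (fun x => dist p x < kthDist X k p)).card ≤ k - 1 := by
  set L := ((X.val.map (fun x => dist p x)).sort (· ≤ ·)) with hLdef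
  have hLlen : L.length = X.card := by
    rw [hLdef, Multiset.length_sort, Multiset.card_map]; rfl
  have hi : k - 1 < L.length := by omega
  have hsorted : L.Pairwise (· ≤ ·) := Multiset.pairwise_sort _ _
  have hcount := countP_lt_of_sorted L hsorted (k - 1) hi
  have hγ : kthDist X k p = L.getD (k-1) 0 := rfl
  have hcard : (X.filter (fun x => dist p x < kthDist X k p)).card
      = L.countP (fun a => decide (a < L.getD (k-1) 0)) := by
    have h1 : (X.filter (fun x => dist p x < kthDist X k p)).card
        = Multiset.card (X.val.filter (fun x => dist p x < kthDist X k p)) := rfl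
    rw [h1, ← Multiset.countP_map (fun x => dist p x) X.val
      (fun a => a < kthDist X k p)]
    conv_lhs => rw [← Multiset.sort_eq (X.val.map (fun x => dist p x)) (· ≤ ·)]
    rw [Multiset.coe_countP, hγ]
  rw [hcard]; exact hcount

theorem cluster_card_and_enumeration_bound {d k : ℕ}
    (X : Finset (EuclideanSpace ℝ (Fin d))) (hk : 1 ≤ k) (hkX : k ≤ X.card)
    (h : ℝ) (hh : 1 ≤ h) (C : Finset (EuclideanSpace ℝ (Fin d))) (hCX : C ⊆ X)
    (hdiam : ∀ p ∈ C, Metric.diam (C : Set (EuclideanSpace ℝ (Fin d))) ≤ h * kthDist X k p) :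
    ((C.card : ℝ) ≤ k * (1 + 8 * h) ^ d) ∧
      ((2 : ℝ) ^ (C.card : ℝ) ≤ (2 : ℝ) ^ ((k : ℝ) * (1 + 8 * h) ^ d)) := by
  have hpow1 : (1:ℝ) ≤ (1 + 8 * h) ^ d := one_le_pow₀ (by linarith)
  have hk1 : (1:ℝ) ≤ (k : ℝ) := by exact_mod_cast hk
  have key : ((C.card : ℝ) ≤ k * (1 + 8 * h) ^ d) := by
    -- trivial if the space is a point
    by_cases hd : d = 0
    · subst hd
      have hsub : (C : Set (EuclideanSpace ℝ (Fin 0))).Subsingleton :=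
        Set.subsingleton_of_subsingleton
      have : C.card ≤ 1 := Finset.card_le_one.mpr (fun a ha b hb => hsub ha hb)
      have h1 : (C.card : ℝ) ≤ 1 := by exact_mod_cast this
      calc (C.card : ℝ) ≤ 1 := h1
        _ ≤ k * (1 + 8 * h) ^ 0 := by simpa using hk1
    have hdpos : 0 < d := Nat.pos_of_ne_zero hd
    haveI : Nontrivial (EuclideanSpace ℝ (Fin d)) := by
      refine ⟨0, EuclideanSpace.single ⟨0, hdpos⟩ 1, fun hcontra => ?_⟩
      have := congrArg (fun f => f ⟨0, hdpos⟩) hcontra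
      simp [EuclideanSpace.single] at this
    rcases C.eq_empty_or_nonempty with rfl | hCne
    · simp; positivity
    obtain ⟨p₀, hp₀, hmin⟩ := C.exists_min_image (kthDist X k) hCne
    set r : ℝ := kthDist X k p₀ with hrdef
    have hr0 : 0 ≤ r := kthDist_nonneg X k p₀
    have hbdd : Bornology.IsBounded (C : Set (EuclideanSpace ℝ (Fin d))) :=
      (C.finite_toSet).isBounded
    have hdC : Metric.diam (C : Set (EuclideanSpace ℝ (Fin d))) ≤ h * r := hdiam p₀ hp₀
    rcases eq_or_lt_of_le hr0 with hr | hrpos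
    · -- r = 0 : all points coincide
      have hdC0 : Metric.diam (C : Set (EuclideanSpace ℝ (Fin d))) ≤ 0 := by
        rw [← hr] at hdC; simpa using hdC
      have : C ⊆ {p₀} := by
        intro q hq
        have hdq : dist q p₀ ≤ 0 :=
          le_trans (Metric.dist_le_diam_of_mem hbdd (by exact_mod_cast hq)
            (by exact_mod_cast hp₀)) hdC0
        have : q = p₀ := by
          have := le_antisymm hdq dist_nonneg
          exact dist_eq_zero.mp this
        simp [this]
      have hc1 : C.card ≤ 1 := le_trans (Finset.card_le_card this) (by simp)
      have h1 : (C.card : ℝ) ≤ 1 := by exact_mod_cast hc1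
      calc (C.card : ℝ) ≤ 1 := h1
        _ ≤ k * (1 + 8 * h) ^ d := by nlinarith
    -- main case : r > 0
    -- maximal r-separated subset S of C
    classical
    set 𝒮 : Finset (Finset (EuclideanSpace ℝ (Fin d))) :=
      C.powerset.filter (fun S => ∀ a ∈ S, ∀ b ∈ S, a ≠ b → r ≤ dist a b) with h𝒮
    have h𝒮ne : 𝒮.Nonempty := ⟨∅, by simp [h𝒮]⟩
    obtain ⟨S, hS𝒮, hSmax⟩ := 𝒮.exists_max_image Finset.card h𝒮ne
    have hSsub : S ⊆ C := by
      have := (Finset.mem_filter.mp hS𝒮).1; exact Finset.mem_powerset.mp this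
    have hSsep : ∀ a ∈ S, ∀ b ∈ S, a ≠ b → r ≤ dist a b :=
      (Finset.mem_filter.mp hS𝒮).2
    have hcover : ∀ q ∈ C, ∃ s ∈ S, dist q s < r := by
      intro q hq
      by_contra hcon
      push_neg at hcon
      have hqS : q ∉ S := fun hqS => absurd (hcon q hqS) (by simp [hrpos])
      have hins : insert q S ∈ 𝒮 := by
        rw [h𝒮, Finset.mem_filter, Finset.mem_powerset]
        refine ⟨Finset.insert_subset hq hSsub, ?_⟩
        intro a ha b hb hab
        rcases Finset.mem_insert.mp ha with rfl | haS
        · rcases Finset.mem_insert.mp hb with rfl | hbS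
          · exact absurd rfl hab
          · exact hcon b hbS
        · rcases Finset.mem_insert.mp hb with rfl | hbS
          · rw [dist_comm]; exact hcon a haS
          · exact hSsep a haS b hbS hab
      have := hSmax _ hins
      rw [Finset.card_insert_of_notMem hqS] at this
      omega
    -- cardinality of C bounded by k * |S|
    have hCcard : C.card ≤ S.card * k := by
      have hsubset : C ⊆ S.biUnion (fun s => C.filter (fun q => dist q s < r)) := by
        intro q hq
        obtain ⟨s, hs, hds⟩ := hcover q hq
        exact Finset.mem_biUnion.mpr ⟨s, hs, Finset.mem_filter.mpr ⟨hq, hds⟩⟩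
      have hcb : ∀ s ∈ S, (C.filter (fun q => dist q s < r)).card ≤ k := by
        intro s hs
        have hsC : s ∈ C := hSsub hs
        have hrs : r ≤ kthDist X k s := hmin s hsC
        have hsub2 : C.filter (fun q => dist q s < r)
            ⊆ X.filter (fun x => dist s x < kthDist X k s) := by
          intro q hq
          obtain ⟨hqC, hqd⟩ := Finset.mem_filter.mp hq
          refine Finset.mem_filter.mpr ⟨hCX hqC, ?_⟩
          rw [dist_comm]; exact lt_of_lt_of_le hqd hrs
        calc (C.filter (fun q => dist q s < r)).card
            ≤ (X.filter (fun x => dist s x < kthDist X k s)).card :=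
              Finset.card_le_card hsub2
          _ ≤ k - 1 := card_lt_kthDist X k hk hkX s
          _ ≤ k := Nat.sub_le k 1
      calc C.card ≤ (S.biUnion (fun s => C.filter (fun q => dist q s < r))).card :=
            Finset.card_le_card hsubset
        _ ≤ ∑ s ∈ S, (C.filter (fun q => dist q s < r)).card := Finset.card_biUnion_le
        _ ≤ ∑ s ∈ S, k := Finset.sum_le_sum hcb
        _ = S.card * k := by rw [Finset.sum_const, smul_eq_mul]
    -- volume packing bound on |S|
    have hSbound : (S.card : ℝ) ≤ (1 + 2 * h) ^ d := by
      set μ : MeasureTheory.Measure (EuclideanSpace ℝ (Fin d)) := MeasureTheory.volume with hμ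
      set R : ℝ := h * r + r / 2 with hR
      have hR0 : 0 ≤ R := by positivity
      have hdisj : (↑S : Set (EuclideanSpace ℝ (Fin d))).PairwiseDisjoint
          (fun s => Metric.ball s (r/2)) := by
        intro a ha b hb hab
        exact Metric.ball_disjoint_ball (by
          have := hSsep a (by exact_mod_cast ha) b (by exact_mod_cast hb) hab
          linarith)
      have hmeas : ∀ s ∈ S, MeasurableSet (Metric.ball s (r/2)) :=
        fun s _ => measurableSet_ball
      have hsubball : (⋃ s ∈ S, Metric.ball s (r/2)) ⊆ Metric.closedBall p₀ R := by
        intro x hx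
        simp only [Set.mem_iUnion] at hx
        obtain ⟨s, hs, hxs⟩ := hx
        have h1 : dist x s < r/2 := Metric.mem_ball.mp hxs
        have h2 : dist s p₀ ≤ h * r :=
          le_trans (Metric.dist_le_diam_of_mem hbdd
            (by exact_mod_cast hSsub hs) (by exact_mod_cast hp₀)) hdC
        have : dist x p₀ ≤ dist x s + dist s p₀ := dist_triangle _ _ _
        rw [Metric.mem_closedBall, hR]
        linarith
      have hfr : Module.finrank ℝ (EuclideanSpace ℝ (Fin d)) = d :=
        finrank_euclideanSpace_fin
      set μB : ENNReal := μ (Metric.ball 0 1) with hμB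
      have hμB0 : μB ≠ 0 := (Metric.measure_ball_pos μ 0 one_pos).ne'
      have hμBtop : μB ≠ ⊤ := MeasureTheory.measure_ball_lt_top.ne
      have hballvol : ∀ s : EuclideanSpace ℝ (Fin d),
          μ (Metric.ball s (r/2)) = ENNReal.ofReal ((r/2)^d) * μB := by
        intro s
        rw [MeasureTheory.Measure.addHaar_ball μ s (by linarith), hfr]
      have hsum : μ (⋃ s ∈ S, Metric.ball s (r/2))
          = (S.card : ENNReal) * (ENNReal.ofReal ((r/2)^d) * μB) := by
        rw [MeasureTheory.measure_biUnion_finset hdisj hmeas]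
        simp_rw [hballvol]
        rw [Finset.sum_const, nsmul_eq_mul]
      have hle : (S.card : ENNReal) * (ENNReal.ofReal ((r/2)^d) * μB)
          ≤ ENNReal.ofReal (R^d) * μB := by
        rw [← hsum]
        calc μ (⋃ s ∈ S, Metric.ball s (r/2))
            ≤ μ (Metric.closedBall p₀ R) := MeasureTheory.measure_mono hsubball
          _ = ENNReal.ofReal (R^d) * μB := by
              rw [MeasureTheory.Measure.addHaar_closedBall μ p₀ hR0, hfr]
      have hle2 : (S.card : ENNReal) * ENNReal.ofReal ((r/2)^d)
          ≤ ENNReal.ofReal (R^d) := by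
        rw [← ENNReal.mul_le_mul_iff_left hμB0 hμBtop]
        calc (S.card : ENNReal) * ENNReal.ofReal ((r/2)^d) * μB
            = (S.card : ENNReal) * (ENNReal.ofReal ((r/2)^d) * μB) := by ring
          _ ≤ ENNReal.ofReal (R^d) * μB := hle
      have hreal : (S.card : ℝ) * (r/2)^d ≤ R^d := by
        have hofr : ENNReal.ofReal ((S.card : ℝ) * (r/2)^d)
            ≤ ENNReal.ofReal (R^d) := by
          rw [ENNReal.ofReal_mul (by positivity), ENNReal.ofReal_natCast]
          exact hle2
        exact (ENNReal.ofReal_le_ofReal_iff (by positivity)).mp hofr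
      have hRfact : R^d = (1 + 2*h)^d * (r/2)^d := by
        rw [← mul_pow]; congr 1; rw [hR]; ring
      rw [hRfact] at hreal
      have hr2pos : (0:ℝ) < (r/2)^d := by positivity
      exact le_of_mul_le_mul_right hreal hr2pos
    -- combine
    have h28 : ((1:ℝ) + 2*h)^d ≤ (1 + 8*h)^d :=
      pow_le_pow_left₀ (by linarith) (by linarith) d
    have hCr : (C.card : ℝ) ≤ (S.card : ℝ) * k := by
      have := hCcard
      calc (C.card : ℝ) ≤ ((S.card * k : ℕ) : ℝ) := by exact_mod_cast this
        _ = (S.card : ℝ) * k := by push_cast; ring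
    calc (C.card : ℝ) ≤ (S.card : ℝ) * k := hCr
      _ ≤ (1 + 2*h)^d * k := by
          apply mul_le_mul_of_nonneg_right hSbound (by positivity)
      _ ≤ (1 + 8*h)^d * k := mul_le_mul_of_nonneg_right h28 (by positivity)
      _ = k * (1 + 8*h)^d := by ring
  exact ⟨key, Real.rpow_le_rpow_of_exponent_le (by norm_num) key⟩
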